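/- Let Γ ≤ G be an almost normal subgroup and suppose the map g ↦ [Γ : Γ_g] (with Γ_g = gΓg⁻¹ ∩ Γ) satisfies [Γ : Γ_g] = [Γ : Γ_{g⁻¹}] for all g ∈ G. Then the function Δ : G → ℚ₊ defined by Δ(g) = [Γ : Γ_{g⁻¹}]/[Γ : Γ_g] is identically 1; in general (without the hypothesis) Δ is a group homomorphism from G to the multiplicative group of positive rationals. -/

import Mathlib

section CocycleAux

open Subgroup

variable {G : Type*} [Group G]

/-- Relative index is invariant under a group automorphism. -/
private lemma relindex_map_mulEquiv (e : G ≃* G) (H K : Subgroup G) :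
    (H.map e.toMonoidHom).relIndex (K.map e.toMonoidHom) = H.relIndex K := by
  rw [MulEquiv.toMonoidHom_eq_coe, Subgroup.map_equiv_eq_comap_symm, Subgroup.relIndex_comap]
  congr 1
  ext x
  simp

private lemma map_conj_mul (g₁ g₂ : G) (Γ : Subgroup G) :
    Γ.map (MulAut.conj (g₁ * g₂)).toMonoidHom =
      (Γ.map (MulAut.conj g₂).toMonoidHom).map (MulAut.conj g₁).toMonoidHom := by
  rw [Subgroup.map_map]
  congr 1
  ext x
  simp [mul_assoc]

private lemma map_conj_cancel (g : G) (Γ : Subgroup G) :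
    (Γ.map (MulAut.conj g⁻¹).toMonoidHom).map (MulAut.conj g).toMonoidHom = Γ := by
  rw [Subgroup.map_map]
  ext x
  simp [mul_assoc]

private lemma self_relindex_map (g : G) (Γ : Subgroup G) :
    Γ.relIndex (Γ.map (MulAut.conj g).toMonoidHom) =
      (Γ.map (MulAut.conj g⁻¹).toMonoidHom).relIndex Γ := by
  have := relindex_map_mulEquiv (MulAut.conj g) (Γ.map (MulAut.conj g⁻¹).toMonoidHom) Γ
  rwa [map_conj_cancel] at this

/-- The index cocycle identity for commensurable subgroups. -/
private lemma cocycle (A B C : Subgroup G)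
    (hBA : B.relIndex A ≠ 0) (hAB : A.relIndex B ≠ 0)
    (hCB : C.relIndex B ≠ 0) (_hBC : B.relIndex C ≠ 0)
    (hCA : C.relIndex A ≠ 0) (_hAC : A.relIndex C ≠ 0) :
    (A.relIndex C : ℚ) / (C.relIndex A) =
      (A.relIndex B : ℚ) / (B.relIndex A) * ((B.relIndex C : ℚ) / (C.relIndex B)) := by
  set D : Subgroup G := A ⊓ B ⊓ C with hD
  have hDA : D ≤ A := inf_le_left.trans inf_le_left
  have hDB : D ≤ B := inf_le_left.trans inf_le_right
  have hDC : D ≤ C := inf_le_right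
  have hdAB : D.relIndex (A ⊓ B) ≠ 0 := by
    rw [hD, inf_relIndex_left]
    exact fun h0 => hCB (relIndex_eq_zero_of_le_right inf_le_right h0)
  have hdBC : D.relIndex (B ⊓ C) ≠ 0 := by
    rw [hD, inf_assoc, inf_relIndex_right]
    exact fun h0 => hAB (relIndex_eq_zero_of_le_right inf_le_left h0)
  have hdAC : D.relIndex (A ⊓ C) ≠ 0 := by
    rw [hD, inf_right_comm, inf_relIndex_left]
    exact fun h0 => hBA (relIndex_eq_zero_of_le_right inf_le_left h0)
  have t1 : D.relIndex (A ⊓ B) * B.relIndex A = D.relIndex A := by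
    rw [← inf_relIndex_left (H := A) (K := B)]
    exact relIndex_mul_relIndex _ _ _ (le_inf hDA hDB) inf_le_left
  have t2 : D.relIndex (A ⊓ C) * C.relIndex A = D.relIndex A := by
    rw [← inf_relIndex_left (H := A) (K := C)]
    exact relIndex_mul_relIndex _ _ _ (le_inf hDA hDC) inf_le_left
  have t3 : D.relIndex (A ⊓ B) * A.relIndex B = D.relIndex B := by
    rw [← inf_relIndex_right (H := A) (K := B)]
    exact relIndex_mul_relIndex _ _ _ (le_inf hDA hDB) inf_le_right
  have t4 : D.relIndex (B ⊓ C) * C.relIndex B = D.relIndex B := by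
    rw [← inf_relIndex_left (H := B) (K := C)]
    exact relIndex_mul_relIndex _ _ _ (le_inf hDB hDC) inf_le_left
  have t5 : D.relIndex (B ⊓ C) * B.relIndex C = D.relIndex C := by
    rw [← inf_relIndex_right (H := B) (K := C)]
    exact relIndex_mul_relIndex _ _ _ (le_inf hDB hDC) inf_le_right
  have t6 : D.relIndex (A ⊓ C) * A.relIndex C = D.relIndex C := by
    rw [← inf_relIndex_right (H := A) (K := C)]
    exact relIndex_mul_relIndex _ _ _ (le_inf hDA hDC) inf_le_right
  have q1 : (D.relIndex (A ⊓ B) : ℚ) * B.relIndex A = D.relIndex A := by exact_mod_cast t1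
  have q2 : (D.relIndex (A ⊓ C) : ℚ) * C.relIndex A = D.relIndex A := by exact_mod_cast t2
  have q3 : (D.relIndex (A ⊓ B) : ℚ) * A.relIndex B = D.relIndex B := by exact_mod_cast t3
  have q4 : (D.relIndex (B ⊓ C) : ℚ) * C.relIndex B = D.relIndex B := by exact_mod_cast t4
  have q5 : (D.relIndex (B ⊓ C) : ℚ) * B.relIndex C = D.relIndex C := by exact_mod_cast t5
  have q6 : (D.relIndex (A ⊓ C) : ℚ) * A.relIndex C = D.relIndex C := by exact_mod_cast t6
  have key : (A.relIndex C : ℚ) * (B.relIndex A) * (C.relIndex B) =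
      (C.relIndex A : ℚ) * (A.relIndex B) * (B.relIndex C) := by
    have hne : (D.relIndex (A ⊓ B) : ℚ) * (D.relIndex (B ⊓ C)) * (D.relIndex (A ⊓ C)) ≠ 0 :=
      mul_ne_zero (mul_ne_zero (Nat.cast_ne_zero.mpr hdAB)
        (Nat.cast_ne_zero.mpr hdBC)) (Nat.cast_ne_zero.mpr hdAC)
    apply mul_left_cancel₀ hne
    calc (D.relIndex (A ⊓ B) : ℚ) * (D.relIndex (B ⊓ C)) * (D.relIndex (A ⊓ C)) *
          ((A.relIndex C : ℚ) * (B.relIndex A) * (C.relIndex B))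
        = ((D.relIndex (A ⊓ C) : ℚ) * A.relIndex C) *
            (((D.relIndex (A ⊓ B) : ℚ) * B.relIndex A) *
              ((D.relIndex (B ⊓ C) : ℚ) * C.relIndex B)) := by ring
      _ = (D.relIndex C : ℚ) * ((D.relIndex A : ℚ) * (D.relIndex B : ℚ)) := by rw [q6, q1, q4]
      _ = ((D.relIndex (B ⊓ C) : ℚ) * B.relIndex C) *
            (((D.relIndex (A ⊓ C) : ℚ) * C.relIndex A) *
              ((D.relIndex (A ⊓ B) : ℚ) * A.relIndex B)) := by rw [q5, q2, q3]
      _ = (D.relIndex (A ⊓ B) : ℚ) * (D.relIndex (B ⊓ C)) * (D.relIndex (A ⊓ C)) *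
          ((C.relIndex A : ℚ) * (A.relIndex B) * (B.relIndex C)) := by ring
  have hCA' : (C.relIndex A : ℚ) ≠ 0 := Nat.cast_ne_zero.mpr hCA
  have hBA' : (B.relIndex A : ℚ) ≠ 0 := Nat.cast_ne_zero.mpr hBA
  have hCB' : (C.relIndex B : ℚ) ≠ 0 := Nat.cast_ne_zero.mpr hCB
  field_simp
  linear_combination key

end CocycleAux

/-- The modular function of the Hecke pair `(G, Γ)`:
`Δ(g) = [Γ : Γ_{g⁻¹}] / [Γ : Γ_g]` where `Γ_g = gΓg⁻¹ ∩ Γ`. -/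
noncomputable def modularDelta {G : Type*} [Group G] (Γ : Subgroup G) (g : G) : ℚ :=
  (((Γ.map (MulAut.conj g⁻¹).toMonoidHom ⊓ Γ).relIndex Γ : ℚ)) /
    (((Γ.map (MulAut.conj g).toMonoidHom ⊓ Γ).relIndex Γ : ℚ))

/-- Let `Γ ≤ G` be almost normal. If `[Γ : Γ_g] = [Γ : Γ_{g⁻¹}]` for all `g`, then
`Δ ≡ 1`; and in general `Δ : G → ℚ₊` is a group homomorphism (the modular function
of the Hecke pair `(G, Γ)`). -/
theorem stmt_9 {G : Type*} [Group G] (Γ : Subgroup G)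
    (h : ∀ g : G, (Γ.map (MulAut.conj g).toMonoidHom ⊓ Γ).relIndex Γ ≠ 0) :
    ((∀ g : G, (Γ.map (MulAut.conj g).toMonoidHom ⊓ Γ).relIndex Γ =
        (Γ.map (MulAut.conj g⁻¹).toMonoidHom ⊓ Γ).relIndex Γ) →
      ∀ g : G, modularDelta Γ g = 1) ∧
    (∀ g₁ g₂ : G, modularDelta Γ (g₁ * g₂) = modularDelta Γ g₁ * modularDelta Γ g₂) := by
  have hN : ∀ g : G, (Γ.map (MulAut.conj g).toMonoidHom).relIndex Γ ≠ 0 := by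
    intro g
    rw [← Subgroup.inf_relIndex_right]
    exact h g
  have hdelta : ∀ g : G, modularDelta Γ g =
      ((Γ.map (MulAut.conj g⁻¹).toMonoidHom).relIndex Γ : ℚ) /
        ((Γ.map (MulAut.conj g).toMonoidHom).relIndex Γ : ℚ) := by
    intro g
    unfold modularDelta
    rw [Subgroup.inf_relIndex_right, Subgroup.inf_relIndex_right]
  constructor
  · intro hs g
    rw [hdelta g]
    have : (Γ.map (MulAut.conj g⁻¹).toMonoidHom).relIndex Γ =
        (Γ.map (MulAut.conj g).toMonoidHom).relIndex Γ := by
      rw [← Subgroup.inf_relIndex_right, ← Subgroup.inf_relIndex_right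
        (H := Γ.map (MulAut.conj g).toMonoidHom)]
      exact (hs g).symm
    rw [this, div_self (Nat.cast_ne_zero.mpr (hN g))]
  · intro g₁ g₂
    set A : Subgroup G := Γ with hA
    set B : Subgroup G := Γ.map (MulAut.conj g₁).toMonoidHom with hB
    set C : Subgroup G := Γ.map (MulAut.conj (g₁ * g₂)).toMonoidHom with hC
    have eAB : A.relIndex B = (Γ.map (MulAut.conj g₁⁻¹).toMonoidHom).relIndex Γ :=
      self_relindex_map g₁ Γ
    have eAC : A.relIndex C = (Γ.map (MulAut.conj (g₁ * g₂)⁻¹).toMonoidHom).relIndex Γ :=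
      self_relindex_map (g₁ * g₂) Γ
    have eCB : C.relIndex B = (Γ.map (MulAut.conj g₂).toMonoidHom).relIndex Γ := by
      rw [hC, hB, map_conj_mul]
      exact relindex_map_mulEquiv (MulAut.conj g₁) _ _
    have eBC : B.relIndex C = (Γ.map (MulAut.conj g₂⁻¹).toMonoidHom).relIndex Γ := by
      rw [hC, hB, map_conj_mul]
      rw [relindex_map_mulEquiv (MulAut.conj g₁) _ _]
      exact self_relindex_map g₂ Γ
    have hco := cocycle A B C (hN g₁) (eAB ▸ hN g₁⁻¹) (eCB ▸ hN g₂) (eBC ▸ hN g₂⁻¹)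
      (hN (g₁ * g₂)) (eAC ▸ hN (g₁ * g₂)⁻¹)
    rw [hdelta (g₁ * g₂), hdelta g₁, hdelta g₂]
    rw [← eAC, ← eAB, ← eBC, ← eCB]
    exact hco
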